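/- Let M = {(1,1), (1,−1), (−1,1), (−1,−1), (2,2), (2,−2), (−2,2), (−2,−2)} ⊂ ℝ², g = ((α/2)|·|₂² + δ_M)** for α > 0, and g* its Fenchel conjugate. Then for every q ∈ ℝ², ∂g*(q) = (sign(q₁), sign(q₂)) · λ(q), where sign denotes the set-valued sign (sign(0) = [−1,1]) applied componentwise, and λ(q) = {1} if |q|₁ < 3α, λ(q) = {2} if |q|₁ > 3α, and λ(q) = [1,2] if |q|₁ = 3α; i.e., ∂g*(q) = {(s₁ t, s₂ t) : s₁ ∈ sign(q₁), s₂ ∈ sign(q₂), t ∈ λ(q)}. -/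

import Mathlib

open MeasureTheory Set Filter Topology

noncomputable section

abbrev Vec (k : ℕ) := EuclideanSpace ℝ (Fin k)

/-- The Fenchel (Legendre–Fenchel) conjugate of an extended-real-valued function on a
real inner product space. -/
def EConj {X : Type*} [NormedAddCommGroup X] [InnerProductSpace ℝ X]
    (f : X → EReal) (p : X) : EReal :=
  ⨆ v, ((inner ℝ p v : ℝ) : EReal) - f v

/-- The convex subdifferential of an extended-real-valued function on a real inner
product space. -/
def ESubdiff {X : Type*} [NormedAddCommGroup X] [InnerProductSpace ℝ X]
    (f : X → EReal) (u : X) : Set X :=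
  {p | ∀ v, f u + ((inner ℝ p (v - u) : ℝ) : EReal) ≤ f v}

/-- The vector `(a, b) ∈ ℝ²`. -/
def mk2 (a b : ℝ) : Vec 2 := WithLp.toLp 2 ![a, b]

/-- The concentric-corners admissible set
`M = {(±1,±1), (±2,±2)} ⊂ ℝ²`. -/
def Mconc : Set (Vec 2) :=
  {mk2 1 1, mk2 1 (-1), mk2 (-1) 1, mk2 (-1) (-1),
   mk2 2 2, mk2 2 (-2), mk2 (-2) 2, mk2 (-2) (-2)}

open Classical in
/-- The multibang penalty `g = ((α/2)|·|₂² + δ_M)**` for the concentric-corners set. -/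
def gConc (α : ℝ) : Vec 2 → EReal :=
  EConj (EConj (fun v => if v ∈ Mconc then ((α/2 * ‖v‖^2 : ℝ) : EReal) else ⊤))

/-- The set-valued sign of convex analysis: `{1}` for `t > 0`, `{−1}` for `t < 0`,
`[−1,1]` for `t = 0`. -/
def signSet (t : ℝ) : Set ℝ :=
  if 0 < t then {1} else if t < 0 then {-1} else Set.Icc (-1) 1

/-- The magnitude factor `λ(q)`: `{1}` for `|q|₁ < 3α`, `{2}` for `|q|₁ > 3α`, and
`[1,2]` for `|q|₁ = 3α`. -/
def lamSet (α : ℝ) (q : Vec 2) : Set ℝ :=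
  if |q 0| + |q 1| < 3*α then {1} else if 3*α < |q 0| + |q 1| then {2} else Set.Icc 1 2

lemma ereal_sub_swap (c : ℝ) (a b : EReal) (h : (c:EReal) - a ≤ b) : (c:EReal) - b ≤ a := by
  induction a using EReal.rec with
  | bot =>
    rw [show ((c:EReal) - ⊥) = ⊤ by simp] at h
    rw [top_le_iff.mp h]
    simp
  | top => exact le_top
  | coe x =>
    induction b using EReal.rec with
    | bot =>
      exfalso
      rw [← EReal.coe_sub] at h
      exact (EReal.coe_ne_bot _) (le_bot_iff.mp h)
    | top => rw [EReal.sub_top]; exact bot_le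
    | coe y =>
      rw [← EReal.coe_sub] at h ⊢
      have h' : (c - x : ℝ) ≤ y := by exact_mod_cast h
      have : (c - y : ℝ) ≤ x := by linarith
      exact_mod_cast this

lemma econj_anti {X : Type*} [NormedAddCommGroup X] [InnerProductSpace ℝ X]
    {f g : X → EReal} (h : ∀ v, f v ≤ g v) (p : X) : EConj g p ≤ EConj f p :=
  iSup_mono fun v => EReal.sub_le_sub le_rfl (h v)

lemma biconj_le {X : Type*} [NormedAddCommGroup X] [InnerProductSpace ℝ X]
    (f : X → EReal) (v : X) : EConj (EConj f) v ≤ f v := by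
  refine iSup_le fun p => ?_
  have h1 : ((inner ℝ p v : ℝ) : EReal) - f v ≤ EConj f p := le_iSup (fun w => ((inner ℝ p w : ℝ):EReal) - f w) v
  have := ereal_sub_swap (inner ℝ p v : ℝ) (f v) (EConj f p) h1
  rwa [real_inner_comm] at this

lemma triple_conj {X : Type*} [NormedAddCommGroup X] [InnerProductSpace ℝ X]
    (f : X → EReal) (p : X) : EConj (EConj (EConj f)) p = EConj f p :=
  le_antisymm (biconj_le (EConj f) p) (econj_anti (biconj_le f) p)

def Fc (α : ℝ) (q : Vec 2) : ℝ :=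
  max (|q 0| + |q 1| - α) (2*(|q 0| + |q 1|) - 4*α)

lemma inner_mk2 (q : Vec 2) (a b : ℝ) : (inner ℝ q (mk2 a b) : ℝ) = q 0 * a + q 1 * b := by
  simp [mk2, PiLp.inner_apply, Fin.sum_univ_two, RCLike.inner_apply]
  ring

lemma norm_mk2 (a b : ℝ) : ‖mk2 a b‖^2 = a^2 + b^2 := by
  rw [← real_inner_self_eq_norm_sq]
  simp only [mk2, PiLp.inner_apply, Fin.sum_univ_two, RCLike.inner_apply]
  simp
  ring

lemma mem_Mconc_iff (v : Vec 2) : v ∈ Mconc ↔ v = mk2 1 1 ∨ v = mk2 1 (-1) ∨ v = mk2 (-1) 1 ∨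
    v = mk2 (-1) (-1) ∨ v = mk2 2 2 ∨ v = mk2 2 (-2) ∨ v = mk2 (-2) 2 ∨ v = mk2 (-2) (-2) := by
  simp [Mconc]

open Classical in
lemma econj_gconc (α : ℝ) (q : Vec 2) : EConj (gConc α) q = ((Fc α q : ℝ) : EReal) := by
  unfold gConc
  rw [triple_conj]
  apply le_antisymm
  · refine iSup_le fun v => ?_
    beta_reduce
    by_cases hv : v ∈ Mconc
    · rw [if_pos hv, ← EReal.coe_sub, EReal.coe_le_coe_iff]
      have h0 := le_abs_self (q 0); have h1 := le_abs_self (q 1)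
      have h0' := neg_abs_le (q 0); have h1' := neg_abs_le (q 1)
      rcases (mem_Mconc_iff v).mp hv with h|h|h|h|h|h|h|h <;> subst h <;>
        rw [inner_mk2, norm_mk2] <;> unfold Fc
      · exact le_max_of_le_left (by nlinarith)
      · exact le_max_of_le_left (by nlinarith)
      · exact le_max_of_le_left (by nlinarith)
      · exact le_max_of_le_left (by nlinarith)
      · exact le_max_of_le_right (by nlinarith)
      · exact le_max_of_le_right (by nlinarith)
      · exact le_max_of_le_right (by nlinarith)
      · exact le_max_of_le_right (by nlinarith)
    · rw [if_neg hv, EReal.sub_top]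
      exact bot_le
  · have hmem : ∀ a b : ℝ, (a = 1 ∨ a = -1) → (b = 1 ∨ b = -1) → mk2 a b ∈ Mconc ∧ mk2 (2*a) (2*b) ∈ Mconc := by
      rintro a b (rfl|rfl) (rfl|rfl) <;> constructor <;> norm_num <;> simp [Mconc]
    set s1 : ℝ := if 0 ≤ q 0 then 1 else -1 with hs1
    set s2 : ℝ := if 0 ≤ q 1 then 1 else -1 with hs2
    have hs1' : s1 = 1 ∨ s1 = -1 := by unfold s1; split <;> simp
    have hs2' : s2 = 1 ∨ s2 = -1 := by unfold s2; split <;> simp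
    have habs1 : q 0 * s1 = |q 0| := by
      unfold s1; rcases le_or_gt 0 (q 0) with h|h
      · rw [if_pos h, abs_of_nonneg h]; ring
      · rw [if_neg (not_le.mpr h), abs_of_neg h]; ring
    have habs2 : q 1 * s2 = |q 1| := by
      unfold s2; rcases le_or_gt 0 (q 1) with h|h
      · rw [if_pos h, abs_of_nonneg h]; ring
      · rw [if_neg (not_le.mpr h), abs_of_neg h]; ring
    obtain ⟨hm1, hm2⟩ := hmem s1 s2 hs1' hs2'
    have e1 : ((|q 0| + |q 1| - α : ℝ) : EReal) ≤
        ⨆ v, ((inner ℝ q v : ℝ):EReal) - (if v ∈ Mconc then ((α/2*‖v‖^2 : ℝ):EReal) else ⊤) := by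
      refine le_trans ?_ (le_iSup _ (mk2 s1 s2))
      rw [if_pos hm1, ← EReal.coe_sub, EReal.coe_le_coe_iff, inner_mk2, norm_mk2]
      have h1sq : s1^2 = 1 := by rcases hs1' with h|h <;> rw [h] <;> norm_num
      have h2sq : s2^2 = 1 := by rcases hs2' with h|h <;> rw [h] <;> norm_num
      have e : s1^2 + s2^2 = 2 := by rw [h1sq, h2sq]; norm_num
      rw [e]; linarith [habs1, habs2]
    have e2 : ((2*(|q 0| + |q 1|) - 4*α : ℝ) : EReal) ≤
        ⨆ v, ((inner ℝ q v : ℝ):EReal) - (if v ∈ Mconc then ((α/2*‖v‖^2 : ℝ):EReal) else ⊤) := by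
      refine le_trans ?_ (le_iSup _ (mk2 (2*s1) (2*s2)))
      rw [if_pos hm2, ← EReal.coe_sub, EReal.coe_le_coe_iff, inner_mk2, norm_mk2]
      have h1sq : s1^2 = 1 := by rcases hs1' with h|h <;> rw [h] <;> norm_num
      have h2sq : s2^2 = 1 := by rcases hs2' with h|h <;> rw [h] <;> norm_num
      have e : (2*s1)^2 + (2*s2)^2 = 8 := by rw [mul_pow, mul_pow, h1sq, h2sq]; norm_num
      rw [e]; linarith [habs1, habs2]
    unfold Fc
    rcases max_cases (|q 0| + |q 1| - α) (2*(|q 0| + |q 1|) - 4*α) with ⟨h,_⟩|⟨h,_⟩ <;> rw [h]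
    · exact e1
    · exact e2

@[simp] lemma mk2_app0 (a b : ℝ) : mk2 a b 0 = a := rfl
@[simp] lemma mk2_app1 (a b : ℝ) : mk2 a b 1 = b := rfl

lemma vec2_ext (v : Vec 2) : v = mk2 (v 0) (v 1) := by
  ext i
  fin_cases i <;> rfl

lemma inner_two (p w : Vec 2) : (inner ℝ p w : ℝ) = p 0 * w 0 + p 1 * w 1 := by
  simp [PiLp.inner_apply, Fin.sum_univ_two, RCLike.inner_apply, mul_comm]

lemma probe (α a b p0 p1 : ℝ)
    (H : ∀ x y : ℝ, max (|a|+|b|-α) (2*(|a|+|b|)-4*α) + (p0*(x-a)+p1*(y-b)) ≤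
      max (|x|+|y|-α) (2*(|x|+|y|)-4*α))
    (u w d1 d2 c : ℝ) (h1 : |a+u| ≤ |a|+d1) (h2 : |b+w| ≤ |b|+d2)
    (hc1 : |a|+|b|+d1+d2-α ≤ c) (hc2 : 2*(|a|+|b|+d1+d2)-4*α ≤ c) :
    max (|a|+|b|-α) (2*(|a|+|b|)-4*α) + (p0*u+p1*w) ≤ c := by
  have h := H (a+u) (b+w)
  have e1 : a+u-a = u := by ring
  have e2 : b+w-b = w := by ring
  rw [e1, e2] at h
  have hm : max (|a+u|+|b+w|-α) (2*(|a+u|+|b+w|)-4*α) ≤ c :=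
    max_le (by linarith) (by linarith)
  linarith

lemma abs_shift_up (a sa δ : ℝ) (hδ : 0 ≤ δ) (hsa : sa*a = |a|) (hsa2 : sa = 1 ∨ sa = -1) :
    |a + sa*δ| = |a| + δ := by
  rcases hsa2 with h|h <;> subst h
  · have ha : 0 ≤ a := by rw [one_mul] at hsa; rw [hsa]; exact abs_nonneg a
    rw [one_mul, abs_of_nonneg (by linarith), abs_of_nonneg ha]
  · have ha : a ≤ 0 := by nlinarith [abs_nonneg a]
    rw [abs_of_nonpos ha]
    rw [show a + (-1)*δ = -((-a) + δ) by ring, abs_neg, abs_of_nonneg (by linarith)]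

lemma abs_shift_down (a sa δ : ℝ) (hδ : 0 ≤ δ) (hδa : δ ≤ |a|) (hsa : sa*a = |a|)
    (hsa2 : sa = 1 ∨ sa = -1) : |a + -(sa*δ)| = |a| - δ := by
  rcases hsa2 with h|h <;> subst h
  · have ha : 0 ≤ a := by rw [one_mul] at hsa; rw [hsa]; exact abs_nonneg a
    rw [abs_of_nonneg ha] at hδa ⊢
    rw [one_mul, abs_of_nonneg (by linarith)]
    ring
  · have ha : a ≤ 0 := by nlinarith [abs_nonneg a]
    rw [abs_of_nonpos ha] at hδa ⊢
    rw [show a + -((-1)*δ) = -((-a) - δ) by ring, abs_neg, abs_of_nonneg (by linarith)]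

lemma sign_exists (x : ℝ) (hx : x ≠ 0) :
    ∃ s : ℝ, s*x = |x| ∧ (s = 1 ∨ s = -1) ∧ s ∈ signSet x := by
  rcases lt_trichotomy x 0 with h|h|h
  · refine ⟨-1, by rw [abs_of_neg h]; ring, Or.inr rfl, ?_⟩
    simp [signSet, h, not_lt.mpr h.le]
  · exact absurd h hx
  · refine ⟨1, by rw [abs_of_pos h]; ring, Or.inl rfl, ?_⟩
    simp [signSet, h]

lemma fwd_real (α : ℝ) (hα : 0 < α) (a b p0 p1 : ℝ)
    (H : ∀ x y : ℝ, max (|a|+|b|-α) (2*(|a|+|b|)-4*α) + (p0*(x-a)+p1*(y-b)) ≤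
      max (|x|+|y|-α) (2*(|x|+|y|)-4*α)) :
    ∃ s₁ ∈ signSet a, ∃ s₂ ∈ signSet b,
      ∃ t ∈ (if |a|+|b| < 3*α then ({1} : Set ℝ) else
        if 3*α < |a|+|b| then ({2} : Set ℝ) else Set.Icc 1 2),
      p0 = s₁*t ∧ p1 = s₂*t := by
  have lb1 : |a|+|b|-α ≤ max (|a|+|b|-α) (2*(|a|+|b|)-4*α) := le_max_left _ _
  have lb2 : 2*(|a|+|b|)-4*α ≤ max (|a|+|b|-α) (2*(|a|+|b|)-4*α) := le_max_right _ _
  have ha0 := abs_nonneg a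
  have hb0 := abs_nonneg b
  rcases lt_trichotomy (|a|+|b|) (3*α) with hL|hL|hL
  · -- Region 1 : L < 3α
    set ε : ℝ := (3*α - (|a|+|b|))/2 with hεdef
    have hε : 0 < ε := by rw [hεdef]; linarith
    have habs_up : ∀ u : ℝ, |u| = ε → ∀ z : ℝ, |z + u| ≤ |z| + ε := fun u hu z => by
      calc |z + u| ≤ |z| + |u| := abs_add_le z u
        _ = |z| + ε := by rw [hu]
    have c1 : p0 ≤ 1 := by
      have h := probe α a b p0 p1 H ε 0 ε 0 (|a|+|b|+ε-α)
        (habs_up ε (abs_of_pos hε) a) (by simp) (by linarith) (by linarith)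
      have h2 : p0*ε ≤ 1*ε := by linarith
      exact (mul_le_mul_iff_left₀ hε).mp h2
    have c2 : -p0 ≤ 1 := by
      have h := probe α a b p0 p1 H (-ε) 0 ε 0 (|a|+|b|+ε-α)
        (habs_up (-ε) (by rw [abs_neg]; exact abs_of_pos hε) a) (by simp)
        (by linarith) (by linarith)
      have h2 : (-p0)*ε ≤ 1*ε := by linarith
      exact (mul_le_mul_iff_left₀ hε).mp h2
    have c3 : p1 ≤ 1 := by
      have h := probe α a b p0 p1 H 0 ε 0 ε (|a|+|b|+ε-α)
        (by simp) (habs_up ε (abs_of_pos hε) b) (by linarith) (by linarith)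
      have h2 : p1*ε ≤ 1*ε := by linarith
      exact (mul_le_mul_iff_left₀ hε).mp h2
    have c4 : -p1 ≤ 1 := by
      have h := probe α a b p0 p1 H 0 (-ε) 0 ε (|a|+|b|+ε-α)
        (by simp) (habs_up (-ε) (by rw [abs_neg]; exact abs_of_pos hε) b)
        (by linarith) (by linarith)
      have h2 : (-p1)*ε ≤ 1*ε := by linarith
      exact (mul_le_mul_iff_left₀ hε).mp h2
    have hs1 : ∃ s₁ ∈ signSet a, p0 = s₁ := by
      by_cases haz : a = 0
      · subst haz
        refine ⟨p0, ?_, rfl⟩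
        simp only [signSet, lt_irrefl, if_false]
        exact ⟨by linarith, c1⟩
      · obtain ⟨sa, hsaa, hsa2, hsam⟩ := sign_exists a haz
        have hεa : 0 < min ε |a| := lt_min hε (abs_pos.mpr haz)
        have h := probe α a b p0 p1 H (-(sa*min ε |a|)) 0 (-(min ε |a|)) 0
          (|a|+|b|-(min ε |a|)-α)
          (by rw [abs_shift_down a sa (min ε |a|) hεa.le (min_le_right _ _) hsaa hsa2]; linarith)
          (by simp) (by linarith) (by linarith [min_le_left ε |a|])
        have h2 : 1*(min ε |a|) ≤ (p0*sa)*(min ε |a|) := by linarith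
        have h3 : 1 ≤ p0*sa := (mul_le_mul_iff_left₀ hεa).mp h2
        refine ⟨sa, hsam, ?_⟩
        rcases hsa2 with h'|h' <;> subst h' <;> linarith
    have hs2 : ∃ s₂ ∈ signSet b, p1 = s₂ := by
      by_cases hbz : b = 0
      · subst hbz
        refine ⟨p1, ?_, rfl⟩
        simp only [signSet, lt_irrefl, if_false]
        exact ⟨by linarith, c3⟩
      · obtain ⟨sb, hsbb, hsb2, hsbm⟩ := sign_exists b hbz
        have hεb : 0 < min ε |b| := lt_min hε (abs_pos.mpr hbz)
        have h := probe α a b p0 p1 H 0 (-(sb*min ε |b|)) 0 (-(min ε |b|))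
          (|a|+|b|-(min ε |b|)-α)
          (by simp)
          (by rw [abs_shift_down b sb (min ε |b|) hεb.le (min_le_right _ _) hsbb hsb2]; linarith)
          (by linarith) (by linarith [min_le_left ε |b|])
        have h2 : 1*(min ε |b|) ≤ (p1*sb)*(min ε |b|) := by linarith
        have h3 : 1 ≤ p1*sb := (mul_le_mul_iff_left₀ hεb).mp h2
        refine ⟨sb, hsbm, ?_⟩
        rcases hsb2 with h'|h' <;> subst h' <;> linarith
    obtain ⟨s₁, hm1, he1⟩ := hs1
    obtain ⟨s₂, hm2, he2⟩ := hs2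
    exact ⟨s₁, hm1, s₂, hm2, 1, by rw [if_pos hL]; rfl,
      by rw [he1, mul_one], by rw [he2, mul_one]⟩
  · -- Region 3 : L = 3α
    have hnlt1 : ¬ (|a|+|b| < 3*α) := by linarith
    have hnlt2 : ¬ (3*α < |a|+|b|) := by linarith
    by_cases haz : a = 0
    · -- a = 0, b ≠ 0
      have ha' : |a| = 0 := by rw [haz]; simp
      have hbz : b ≠ 0 := by
        intro h
        rw [ha', h] at hL
        simp at hL
        linarith
      obtain ⟨sb, hsbb, hsb2, hsbm⟩ := sign_exists b hbz
      have hb3 : |b| = 3*α := by linarith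
      have q1 : p1*sb ≤ 2 := by
        have h := probe α a b p0 p1 H 0 (sb*α) 0 α (2*(|a|+|b|+α)-4*α)
          (by simp) (abs_shift_up b sb α hα.le hsbb hsb2).le (by linarith) (by linarith)
        have h2 : (p1*sb)*α ≤ 2*α := by linarith
        exact (mul_le_mul_iff_left₀ hα).mp h2
      have q2 : 1 ≤ p1*sb := by
        have h := probe α a b p0 p1 H 0 (-(sb*α)) 0 (-α) (|a|+|b|-α-α)
          (by simp)
          (by rw [abs_shift_down b sb α hα.le (by linarith) hsbb hsb2]; linarith)
          (by linarith) (by linarith)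
        have h2 : 1*α ≤ (p1*sb)*α := by linarith
        exact (mul_le_mul_iff_left₀ hα).mp h2
      have q3 : p0 ≤ p1*sb := by
        have h := probe α a b p0 p1 H α (-(sb*α)) α (-α) (|a|+|b|-α)
          (by calc |a+α| ≤ |a|+|α| := abs_add_le a α
                _ = |a|+α := by rw [abs_of_pos hα])
          (by rw [abs_shift_down b sb α hα.le (by linarith) hsbb hsb2]; linarith)
          (by linarith) (by linarith)
        have h2 : p0*α ≤ (p1*sb)*α := by linarith
        exact (mul_le_mul_iff_left₀ hα).mp h2
      have q4 : -p0 ≤ p1*sb := by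
        have h := probe α a b p0 p1 H (-α) (-(sb*α)) α (-α) (|a|+|b|-α)
          (by calc |a+(-α)| ≤ |a|+|(-α)| := abs_add_le a (-α)
                _ = |a|+α := by rw [abs_neg, abs_of_pos hα])
          (by rw [abs_shift_down b sb α hα.le (by linarith) hsbb hsb2]; linarith)
          (by linarith) (by linarith)
        have h2 : (-p0)*α ≤ (p1*sb)*α := by linarith
        exact (mul_le_mul_iff_left₀ hα).mp h2
      have ht0 : 0 < p1*sb := by linarith
      have hss : sb*sb = 1 := by rcases hsb2 with h|h <;> rw [h] <;> norm_num
      refine ⟨p0/(p1*sb), ?_, sb, hsbm, p1*sb, ?_, ?_, ?_⟩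
      · rw [haz]
        simp only [signSet, lt_irrefl, if_false]
        exact ⟨by rw [le_div_iff₀ ht0]; linarith, by rw [div_le_iff₀ ht0]; linarith⟩
      · rw [if_neg hnlt1, if_neg hnlt2]
        exact ⟨q2, q1⟩
      · exact (div_mul_cancel₀ p0 (ne_of_gt ht0)).symm
      · rw [show sb*(p1*sb) = p1*(sb*sb) by ring, hss, mul_one]
    · by_cases hbz : b = 0
      · -- b = 0, a ≠ 0
        have hb' : |b| = 0 := by rw [hbz]; simp
        obtain ⟨sa, hsaa, hsa2, hsam⟩ := sign_exists a haz
        have ha3 : |a| = 3*α := by linarith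
        have q1 : p0*sa ≤ 2 := by
          have h := probe α a b p0 p1 H (sa*α) 0 α 0 (2*(|a|+|b|+α)-4*α)
            (abs_shift_up a sa α hα.le hsaa hsa2).le (by simp) (by linarith) (by linarith)
          have h2 : (p0*sa)*α ≤ 2*α := by linarith
          exact (mul_le_mul_iff_left₀ hα).mp h2
        have q2 : 1 ≤ p0*sa := by
          have h := probe α a b p0 p1 H (-(sa*α)) 0 (-α) 0 (|a|+|b|-α-α)
            (by rw [abs_shift_down a sa α hα.le (by linarith) hsaa hsa2]; linarith)
            (by simp) (by linarith) (by linarith)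
          have h2 : 1*α ≤ (p0*sa)*α := by linarith
          exact (mul_le_mul_iff_left₀ hα).mp h2
        have q3 : p1 ≤ p0*sa := by
          have h := probe α a b p0 p1 H (-(sa*α)) α (-α) α (|a|+|b|-α)
            (by rw [abs_shift_down a sa α hα.le (by linarith) hsaa hsa2]; linarith)
            (by calc |b+α| ≤ |b|+|α| := abs_add_le b α
                  _ = |b|+α := by rw [abs_of_pos hα])
            (by linarith) (by linarith)
          have h2 : p1*α ≤ (p0*sa)*α := by linarith
          exact (mul_le_mul_iff_left₀ hα).mp h2
        have q4 : -p1 ≤ p0*sa := by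
          have h := probe α a b p0 p1 H (-(sa*α)) (-α) (-α) α (|a|+|b|-α)
            (by rw [abs_shift_down a sa α hα.le (by linarith) hsaa hsa2]; linarith)
            (by calc |b+(-α)| ≤ |b|+|(-α)| := abs_add_le b (-α)
                  _ = |b|+α := by rw [abs_neg, abs_of_pos hα])
            (by linarith) (by linarith)
          have h2 : (-p1)*α ≤ (p0*sa)*α := by linarith
          exact (mul_le_mul_iff_left₀ hα).mp h2
        have ht0 : 0 < p0*sa := by linarith
        have hss : sa*sa = 1 := by rcases hsa2 with h|h <;> rw [h] <;> norm_num
        refine ⟨sa, hsam, p1/(p0*sa), ?_, p0*sa, ?_, ?_, ?_⟩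
        · rw [hbz]
          simp only [signSet, lt_irrefl, if_false]
          exact ⟨by rw [le_div_iff₀ ht0]; linarith, by rw [div_le_iff₀ ht0]; linarith⟩
        · rw [if_neg hnlt1, if_neg hnlt2]
          exact ⟨q2, q1⟩
        · rw [show sa*(p0*sa) = p0*(sa*sa) by ring, hss, mul_one]
        · exact (div_mul_cancel₀ p1 (ne_of_gt ht0)).symm
      · -- both nonzero
        obtain ⟨sa, hsaa, hsa2, hsam⟩ := sign_exists a haz
        obtain ⟨sb, hsbb, hsb2, hsbm⟩ := sign_exists b hbz
        set ε : ℝ := min |a| |b| with hεdef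
        have hε : 0 < ε := lt_min (abs_pos.mpr haz) (abs_pos.mpr hbz)
        have hεa : ε ≤ |a| := min_le_left _ _
        have hεb : ε ≤ |b| := min_le_right _ _
        have e1 : p0*sa + p1*sb ≤ 4 := by
          have h := probe α a b p0 p1 H (sa*ε) (sb*ε) ε ε (2*(|a|+|b|+ε+ε)-4*α)
            (abs_shift_up a sa ε hε.le hsaa hsa2).le
            (abs_shift_up b sb ε hε.le hsbb hsb2).le (by linarith) (by linarith)
          have h2 : (p0*sa + p1*sb)*ε ≤ 4*ε := by linarith
          exact (mul_le_mul_iff_left₀ hε).mp h2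
        have e2 : 2 ≤ p0*sa + p1*sb := by
          have h := probe α a b p0 p1 H (-(sa*ε)) (-(sb*ε)) (-ε) (-ε) (|a|+|b|-ε-ε-α)
            (by rw [abs_shift_down a sa ε hε.le hεa hsaa hsa2]; linarith)
            (by rw [abs_shift_down b sb ε hε.le hεb hsbb hsb2]; linarith)
            (by linarith) (by linarith)
          have h2 : 2*ε ≤ (p0*sa + p1*sb)*ε := by linarith
          exact (mul_le_mul_iff_left₀ hε).mp h2
        have e3 : p0*sa ≤ p1*sb := by
          have h := probe α a b p0 p1 H (sa*ε) (-(sb*ε)) ε (-ε) (|a|+|b|-α)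
            (abs_shift_up a sa ε hε.le hsaa hsa2).le
            (by rw [abs_shift_down b sb ε hε.le hεb hsbb hsb2]; linarith)
            (by linarith) (by linarith)
          have h2 : (p0*sa)*ε ≤ (p1*sb)*ε := by linarith
          exact (mul_le_mul_iff_left₀ hε).mp h2
        have e4 : p1*sb ≤ p0*sa := by
          have h := probe α a b p0 p1 H (-(sa*ε)) (sb*ε) (-ε) ε (|a|+|b|-α)
            (by rw [abs_shift_down a sa ε hε.le hεa hsaa hsa2]; linarith)
            (abs_shift_up b sb ε hε.le hsbb hsb2).le
            (by linarith) (by linarith)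
          have h2 : (p1*sb)*ε ≤ (p0*sa)*ε := by linarith
          exact (mul_le_mul_iff_left₀ hε).mp h2
        have heq : p1*sb = p0*sa := le_antisymm e4 e3
        have hssa : sa*sa = 1 := by rcases hsa2 with h|h <;> rw [h] <;> norm_num
        have hssb : sb*sb = 1 := by rcases hsb2 with h|h <;> rw [h] <;> norm_num
        refine ⟨sa, hsam, sb, hsbm, p0*sa, ?_, ?_, ?_⟩
        · rw [if_neg hnlt1, if_neg hnlt2]
          exact ⟨by linarith, by linarith⟩
        · rw [show sa*(p0*sa) = p0*(sa*sa) by ring, hssa, mul_one]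
        · rw [← heq, show sb*(p1*sb) = p1*(sb*sb) by ring, hssb, mul_one]

  · -- Region 2 : L > 3α
    set ε : ℝ := ((|a|+|b|) - 3*α)/2 with hεdef
    have hε : 0 < ε := by rw [hεdef]; linarith
    have habs_up : ∀ u : ℝ, |u| = ε → ∀ z : ℝ, |z + u| ≤ |z| + ε := fun u hu z => by
      calc |z + u| ≤ |z| + |u| := abs_add_le z u
        _ = |z| + ε := by rw [hu]
    have c1 : p0 ≤ 2 := by
      have h := probe α a b p0 p1 H ε 0 ε 0 (2*(|a|+|b|+ε)-4*α)
        (habs_up ε (abs_of_pos hε) a) (by simp) (by linarith) (by linarith)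
      have h2 : p0*ε ≤ 2*ε := by linarith
      exact (mul_le_mul_iff_left₀ hε).mp h2
    have c2 : -p0 ≤ 2 := by
      have h := probe α a b p0 p1 H (-ε) 0 ε 0 (2*(|a|+|b|+ε)-4*α)
        (habs_up (-ε) (by rw [abs_neg]; exact abs_of_pos hε) a) (by simp)
        (by linarith) (by linarith)
      have h2 : (-p0)*ε ≤ 2*ε := by linarith
      exact (mul_le_mul_iff_left₀ hε).mp h2
    have c3 : p1 ≤ 2 := by
      have h := probe α a b p0 p1 H 0 ε 0 ε (2*(|a|+|b|+ε)-4*α)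
        (by simp) (habs_up ε (abs_of_pos hε) b) (by linarith) (by linarith)
      have h2 : p1*ε ≤ 2*ε := by linarith
      exact (mul_le_mul_iff_left₀ hε).mp h2
    have c4 : -p1 ≤ 2 := by
      have h := probe α a b p0 p1 H 0 (-ε) 0 ε (2*(|a|+|b|+ε)-4*α)
        (by simp) (habs_up (-ε) (by rw [abs_neg]; exact abs_of_pos hε) b)
        (by linarith) (by linarith)
      have h2 : (-p1)*ε ≤ 2*ε := by linarith
      exact (mul_le_mul_iff_left₀ hε).mp h2
    have hs1 : ∃ s₁ ∈ signSet a, p0 = s₁*2 := by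
      by_cases haz : a = 0
      · subst haz
        refine ⟨p0/2, ?_, by ring⟩
        simp only [signSet, lt_irrefl, if_false]
        constructor <;> [rw [le_div_iff₀ (by norm_num : (0:ℝ) < 2)]; rw [div_le_iff₀ (by norm_num : (0:ℝ) < 2)]] <;> linarith
      · obtain ⟨sa, hsaa, hsa2, hsam⟩ := sign_exists a haz
        have hεa : 0 < min ε |a| := lt_min hε (abs_pos.mpr haz)
        have h := probe α a b p0 p1 H (-(sa*min ε |a|)) 0 (-(min ε |a|)) 0
          (2*(|a|+|b|-(min ε |a|))-4*α)
          (by rw [abs_shift_down a sa (min ε |a|) hεa.le (min_le_right _ _) hsaa hsa2]; linarith)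
          (by simp) (by linarith [min_le_left ε |a|]) (by linarith)
        have h2 : 2*(min ε |a|) ≤ (p0*sa)*(min ε |a|) := by linarith
        have h3 : 2 ≤ p0*sa := (mul_le_mul_iff_left₀ hεa).mp h2
        refine ⟨sa, hsam, ?_⟩
        rcases hsa2 with h'|h' <;> subst h' <;> linarith
    have hs2 : ∃ s₂ ∈ signSet b, p1 = s₂*2 := by
      by_cases hbz : b = 0
      · subst hbz
        refine ⟨p1/2, ?_, by ring⟩
        simp only [signSet, lt_irrefl, if_false]
        constructor <;> [rw [le_div_iff₀ (by norm_num : (0:ℝ) < 2)]; rw [div_le_iff₀ (by norm_num : (0:ℝ) < 2)]] <;> linarith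
      · obtain ⟨sb, hsbb, hsb2, hsbm⟩ := sign_exists b hbz
        have hεb : 0 < min ε |b| := lt_min hε (abs_pos.mpr hbz)
        have h := probe α a b p0 p1 H 0 (-(sb*min ε |b|)) 0 (-(min ε |b|))
          (2*(|a|+|b|-(min ε |b|))-4*α)
          (by simp)
          (by rw [abs_shift_down b sb (min ε |b|) hεb.le (min_le_right _ _) hsbb hsb2]; linarith)
          (by linarith [min_le_left ε |b|]) (by linarith)
        have h2 : 2*(min ε |b|) ≤ (p1*sb)*(min ε |b|) := by linarith
        have h3 : 2 ≤ p1*sb := (mul_le_mul_iff_left₀ hεb).mp h2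
        refine ⟨sb, hsbm, ?_⟩
        rcases hsb2 with h'|h' <;> subst h' <;> linarith
    obtain ⟨s₁, hm1, he1⟩ := hs1
    obtain ⟨s₂, hm2, he2⟩ := hs2
    exact ⟨s₁, hm1, s₂, hm2, 2,
      by rw [if_neg (by linarith), if_pos hL]; rfl, he1, he2⟩

lemma sign_facts (x s : ℝ) (hs : s ∈ signSet x) : s*x = |x| ∧ -1 ≤ s ∧ s ≤ 1 := by
  unfold signSet at hs
  split_ifs at hs with h1 h2
  · rw [Set.mem_singleton_iff] at hs; subst hs
    exact ⟨by rw [one_mul, abs_of_pos h1], by norm_num, by norm_num⟩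
  · rw [Set.mem_singleton_iff] at hs; subst hs
    exact ⟨by rw [abs_of_neg h2]; ring, by norm_num, by norm_num⟩
  · have hx0 : x = 0 := le_antisymm (not_lt.mp h1) (not_lt.mp h2)
    subst hx0
    exact ⟨by simp, hs.1, hs.2⟩

lemma bwd_real (α : ℝ) (hα : 0 < α) (a b p0 p1 s₁ s₂ t : ℝ)
    (hs₁ : s₁ ∈ signSet a) (hs₂ : s₂ ∈ signSet b)
    (ht : t ∈ (if |a|+|b| < 3*α then ({1} : Set ℝ) else
      if 3*α < |a|+|b| then ({2} : Set ℝ) else Set.Icc 1 2))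
    (hp0 : p0 = s₁*t) (hp1 : p1 = s₂*t) :
    ∀ x y : ℝ, max (|a|+|b|-α) (2*(|a|+|b|)-4*α) + (p0*(x-a)+p1*(y-b)) ≤
      max (|x|+|y|-α) (2*(|x|+|y|)-4*α) := by
  obtain ⟨hs1x, hs1l, hs1u⟩ := sign_facts a s₁ hs₁
  obtain ⟨hs2x, hs2l, hs2u⟩ := sign_facts b s₂ hs₂
  have htf : 1 ≤ t ∧ t ≤ 2 ∧
      max (|a|+|b|-α) (2*(|a|+|b|)-4*α) ≤ t*(|a|+|b|)+(2-3*t)*α := by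
    split_ifs at ht with h1 h2
    · rw [Set.mem_singleton_iff] at ht; subst ht
      exact ⟨le_rfl, by norm_num, max_le (by linarith) (by linarith)⟩
    · rw [Set.mem_singleton_iff] at ht; subst ht
      exact ⟨by norm_num, le_rfl, max_le (by linarith) (by linarith)⟩
    · have hL : |a|+|b| = 3*α := le_antisymm (not_lt.mp h2) (not_lt.mp h1)
      exact ⟨ht.1, ht.2, max_le (by nlinarith [ht.1, ht.2]) (by nlinarith [ht.1, ht.2])⟩
  obtain ⟨ht1, ht2, htm⟩ := htf
  intro x y
  have ht0 : (0:ℝ) ≤ t := by linarith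
  have k1 : s₁*x ≤ |x| := by
    have ha1 : |s₁| ≤ 1 := abs_le.mpr ⟨hs1l, hs1u⟩
    have h2 : |s₁ * x| ≤ |x| := by
      rw [abs_mul]
      nlinarith [abs_nonneg x, abs_nonneg s₁]
    linarith [le_abs_self (s₁ * x)]
  have k2 : s₂*y ≤ |y| := by
    have ha1 : |s₂| ≤ 1 := abs_le.mpr ⟨hs2l, hs2u⟩
    have h2 : |s₂ * y| ≤ |y| := by
      rw [abs_mul]
      nlinarith [abs_nonneg y, abs_nonneg s₂]
    linarith [le_abs_self (s₂ * y)]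
  have k1' : t*(s₁*x) ≤ t*|x| := mul_le_mul_of_nonneg_left k1 ht0
  have k2' : t*(s₂*y) ≤ t*|y| := mul_le_mul_of_nonneg_left k2 ht0
  have ka : t*(s₁*a) = t*|a| := by rw [hs1x]
  have kb : t*(s₂*b) = t*|b| := by rw [hs2x]
  have key : t*(|x|+|y|)+(2-3*t)*α ≤ max (|x|+|y|-α) (2*(|x|+|y|)-4*α) := by
    have m1 := le_max_left (|x|+|y|-α) (2*(|x|+|y|)-4*α)
    have m2 := le_max_right (|x|+|y|-α) (2*(|x|+|y|)-4*α)
    nlinarith [mul_nonneg (by linarith : (0:ℝ) ≤ 2-t)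
        (by linarith : (0:ℝ) ≤ max (|x|+|y|-α) (2*(|x|+|y|)-4*α) - (|x|+|y|-α)),
      mul_nonneg (by linarith : (0:ℝ) ≤ t-1)
        (by linarith : (0:ℝ) ≤ max (|x|+|y|-α) (2*(|x|+|y|)-4*α) - (2*(|x|+|y|)-4*α))]
  subst hp0 hp1
  nlinarith [htm, key, k1', k2', ka, kb]


/-- subdifferential of the conjugate, concentric corners: for
`M = {(±1,±1), (±2,±2)}` and `g = ((α/2)|·|₂² + δ_M)**`, the subdifferential of `g*` is
`∂g*(q) = (sign(q₁), sign(q₂)) · λ(q)` with the set-valued sign and the magnitude set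
`λ(q)` as above. -/
theorem subdifferential_conjugate_concentric (α : ℝ) (hα : 0 < α) :
    ∀ q : Vec 2,
      ESubdiff (EConj (gConc α)) q =
        {v : Vec 2 | ∃ s₁ ∈ signSet (q 0), ∃ s₂ ∈ signSet (q 1), ∃ t ∈ lamSet α q,
          v = mk2 (s₁ * t) (s₂ * t)} := by
  intro q
  ext p
  simp only [Set.mem_setOf_eq]
  constructor
  · intro hp
    have H : ∀ x y : ℝ, max (|q 0|+|q 1|-α) (2*(|q 0|+|q 1|)-4*α) +
        (p 0*(x-q 0)+p 1*(y-q 1)) ≤ max (|x|+|y|-α) (2*(|x|+|y|)-4*α) := by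
      intro x y
      have h := hp (mk2 x y)
      rw [econj_gconc, econj_gconc, ← EReal.coe_add, EReal.coe_le_coe_iff] at h
      have hi : (inner ℝ p (mk2 x y - q) : ℝ) = p 0*(x - q 0)+p 1*(y - q 1) := by
        rw [inner_two]; simp
      rw [hi] at h
      unfold Fc at h
      simpa using h
    obtain ⟨s₁, hm1, s₂, hm2, t, hmt, h0, h1⟩ :=
      fwd_real α hα (q 0) (q 1) (p 0) (p 1) H
    refine ⟨s₁, hm1, s₂, hm2, t, ?_, ?_⟩
    · unfold lamSet; exact hmt
    · calc p = mk2 (p 0) (p 1) := vec2_ext p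
        _ = mk2 (s₁*t) (s₂*t) := by rw [h0, h1]
  · rintro ⟨s₁, hm1, s₂, hm2, t, hmt, hpv⟩
    intro v
    rw [econj_gconc, econj_gconc, ← EReal.coe_add, EReal.coe_le_coe_iff]
    have hi : (inner ℝ p (v - q) : ℝ) = p 0*(v 0 - q 0)+p 1*(v 1 - q 1) := by
      rw [inner_two]; simp
    rw [hi]
    have hmt' : t ∈ (if |q 0|+|q 1| < 3*α then ({1} : Set ℝ) else
        if 3*α < |q 0|+|q 1| then ({2} : Set ℝ) else Set.Icc 1 2) := by
      unfold lamSet at hmt; exact hmt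
    have hp0 : p 0 = s₁*t := by rw [hpv]; simp
    have hp1 : p 1 = s₂*t := by rw [hpv]; simp
    have := bwd_real α hα (q 0) (q 1) (p 0) (p 1) s₁ s₂ t hm1 hm2 hmt' hp0 hp1 (v 0) (v 1)
    unfold Fc
    exact this
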